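/- Fix q ∈ (1,2] and n ≥ 1, and let T be a tree with a refining sequence of tree partitions whose levels satisfy: every element B at level m containing a point s satisfies sup_{s∈B} d_𝕀(root(B), s) ≤ ε_m := (m log 2)^{−(1−1/q)}. Let μ ∈ ℓ¹(T), ‖μ‖₁ ≤ 1, and let 𝔏_μ be the partition of T into extremal light domains (each L ∈ 𝔏_μ at level |L| satisfies |μ|(L) ≤ |L|/n). Then ∑_{L∈𝔏_μ} |μ|(L)^q · ε_{|L|}^q ≤ c · n^{−(q−1)} for a constant c depending only on q. -/

import Mathlib

open scoped ENNReal

lemma ancestor_aux {T : Type} (B : ℕ → Set (Set T))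
    (href : ∀ m, ∀ A ∈ B (m + 1), ∃ A' ∈ B m, A ⊆ A') :
    ∀ k m, ∀ A ∈ B (m + k), ∃ A' ∈ B m, A ⊆ A' := by
  intro k
  induction k with
  | zero => intro m A hA; exact ⟨A, hA, subset_rfl⟩
  | succ k ih =>
      intro m A hA
      obtain ⟨A', hA', hsub⟩ := href (m + k) A hA
      obtain ⟨A'', h1, h2⟩ := ih m A' hA'
      exact ⟨A'', h1, hsub.trans h2⟩

lemma per_term (q : ℝ) (hq1 : 1 < q) (m n : ℕ) (hn : 1 ≤ n) (a : ℝ) (ha : 0 ≤ a)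
    (hle : a ≤ (m : ℝ) / n) :
    a ^ q * (((m : ℝ) * Real.log 2) ^ (-(1 - 1 / q))) ^ q ≤
      a * ((Real.log 2) ^ (-(q - 1)) * (n : ℝ) ^ (-(q - 1))) := by
  have hL : (0 : ℝ) < Real.log 2 := Real.log_pos (by norm_num)
  have hq0 : (0 : ℝ) < q := by linarith
  have hq1' : (0 : ℝ) ≤ q - 1 := by linarith
  have hn0 : (0 : ℝ) < n := by exact_mod_cast hn
  rcases Nat.eq_zero_or_pos m with hm | hm
  · subst hm
    have ha0 : a = 0 := le_antisymm (by simpa using hle) ha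
    subst ha0
    rw [Real.zero_rpow (ne_of_gt hq0)]
    simp
  · have hm0 : (0 : ℝ) < m := by exact_mod_cast hm
    have hmL : (0 : ℝ) < (m : ℝ) * Real.log 2 := by positivity
    have hexp : (-(1 - 1 / q)) * q = -(q - 1) := by field_simp
    rw [← Real.rpow_mul hmL.le, hexp]
    rcases eq_or_lt_of_le ha with ha0 | ha0
    · rw [← ha0, Real.zero_rpow (ne_of_gt hq0)]
      simp
    · have haq : a ^ q = a * a ^ (q - 1) := by
        rw [show a * a ^ (q - 1) = a ^ (1 : ℝ) * a ^ (q - 1) from by rw [Real.rpow_one],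
          ← Real.rpow_add ha0]
        norm_num
      rw [haq, mul_assoc]
      refine mul_le_mul_of_nonneg_left ?_ ha
      have key : a ^ (q - 1) * ((m : ℝ) * Real.log 2) ^ (-(q - 1)) =
          (a / ((m : ℝ) * Real.log 2)) ^ (q - 1) := by
        rw [Real.div_rpow ha hmL.le, Real.rpow_neg hmL.le, div_eq_mul_inv]
      have key2 : Real.log 2 ^ (-(q - 1)) * (n : ℝ) ^ (-(q - 1)) =
          (1 / (Real.log 2 * n)) ^ (q - 1) := by
        rw [Real.div_rpow zero_le_one (by positivity), Real.one_rpow,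
          Real.mul_rpow hL.le hn0.le, Real.rpow_neg hL.le, Real.rpow_neg hn0.le,
          one_div, mul_inv]
      rw [key, key2]
      refine Real.rpow_le_rpow (by positivity) ?_ hq1'
      rw [div_le_div_iff₀ hmL (by positivity)]
      calc a * (Real.log 2 * n) = (a * n) * Real.log 2 := by ring
        _ ≤ (m : ℝ) * Real.log 2 := by
            refine mul_le_mul_of_nonneg_right ?_ hL.le
            exact (le_div_iff₀ hn0).mp hle
        _ = 1 * ((m:ℝ) * Real.log 2) := by ring

theorem stmt_18 (q : ℝ) (hq1 : 1 < q) (hq2 : q ≤ 2) :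
    ∃ c > 0, ∀ (T : Type) (B : ℕ → Set (Set T)) (dI : T → T → ℝ) (n : ℕ) (μ : T → ℝ),
      B 0 = {Set.univ} →
      (∀ m, ∀ A ∈ B m, A.Nonempty) →
      (∀ m, ∀ A ∈ B m, ∀ A' ∈ B m, A ≠ A' → A ∩ A' = ∅) →
      (∀ m, ⋃₀ B m = Set.univ) →
      (∀ m, ∀ A ∈ B (m + 1), ∃ A' ∈ B m, A ⊆ A') →
      (∀ m, 1 ≤ m → ∀ A ∈ B m, ∃ rt ∈ A, ∀ s ∈ A,
        dI rt s ≤ ((m : ℝ) * Real.log 2) ^ (-(1 - 1 / q))) →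
      1 ≤ n →
      (Summable fun t => |μ t|) → (∑' t, |μ t|) ≤ 1 →
      (∑' p : {p : ℕ × Set T | p.2 ∈ B p.1 ∧
            (∑' t : p.2, |μ t|) ≤ (p.1 : ℝ) / n ∧
            ∀ m' A', m' < p.1 → A' ∈ B m' → p.2 ⊆ A' →
              (m' : ℝ) / n < ∑' t : A', |μ t|},
          ENNReal.ofReal ((∑' t : (p : ℕ × Set T).2, |μ t|) ^ q *
            ((((p : ℕ × Set T).1 : ℝ) * Real.log 2) ^ (-(1 - 1 / q))) ^ q)) ≤
        ENNReal.ofReal (c * (n : ℝ) ^ (-(q - 1))) := by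
  have hL : (0 : ℝ) < Real.log 2 := Real.log_pos (by norm_num)
  refine ⟨(Real.log 2) ^ (-(q - 1)), Real.rpow_pos_of_pos hL _, ?_⟩
  intro T B dI n μ hB0 hne hdisj hcover href hrad hn hsum hnorm
  set S := {p : ℕ × Set T | p.2 ∈ B p.1 ∧
      (∑' t : p.2, |μ t|) ≤ (p.1 : ℝ) / n ∧
      ∀ m' A', m' < p.1 → A' ∈ B m' → p.2 ⊆ A' →
        (m' : ℝ) / n < ∑' t : A', |μ t|} with hS
  set C : ℝ≥0∞ := ENNReal.ofReal ((Real.log 2) ^ (-(q - 1)) * (n : ℝ) ^ (-(q - 1))) with hC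
  -- key disjointness: two extremal light domains intersecting must be equal
  have hkey : ∀ p ∈ S, ∀ p' ∈ S, (p : ℕ × Set T).1 ≤ (p' : ℕ × Set T).1 →
      ∀ t, t ∈ p.2 → t ∈ p'.2 → p = p' := by
    rintro ⟨m, A⟩ hp ⟨m', A'⟩ hp' hmm t ht ht'
    simp only [hS, Set.mem_setOf_eq] at hp hp'
    dsimp only at hmm ht ht' hp hp' ⊢
    rcases eq_or_lt_of_le hmm with heq | hlt
    · subst heq
      have hAA : A = A' := by
        by_contra hAA
        have hemp := hdisj m A hp.1 A' hp'.1 hAA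
        have : t ∈ (∅ : Set T) := hemp ▸ Set.mem_inter ht ht'
        exact this.elim
      rw [hAA]
    · exfalso
      obtain ⟨A'', hA'', hsub⟩ := ancestor_aux B href (m' - m) m A' (by
        rw [Nat.add_sub_cancel' hmm]; exact hp'.1)
      have hAeq : A = A'' := by
        by_contra hne'
        have hemp := hdisj m A hp.1 A'' hA'' hne'
        have : t ∈ (∅ : Set T) := hemp ▸ Set.mem_inter ht (hsub ht')
        exact this.elim
      have hgt := hp'.2.2 m A hlt (hAeq ▸ hp.1) (hAeq ▸ hsub)
      have hle := hp.2.1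
      rw [hAeq] at hle
      linarith
  -- per-term bound
  have hterm : ∀ p : S,
      ENNReal.ofReal ((∑' t : (p : ℕ × Set T).2, |μ t|) ^ q *
        ((((p : ℕ × Set T).1 : ℝ) * Real.log 2) ^ (-(1 - 1 / q))) ^ q) ≤
      (∑' t : (p : ℕ × Set T).2, ENNReal.ofReal |μ t|) * C := by
    rintro ⟨⟨m, A⟩, hp⟩
    simp only [hS, Set.mem_setOf_eq] at hp
    have ha : (0:ℝ) ≤ ∑' t : A, |μ t| := tsum_nonneg (fun _ => abs_nonneg _)
    have h1 := per_term q hq1 m n hn _ ha hp.2.1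
    refine le_trans (ENNReal.ofReal_le_ofReal h1) ?_
    rw [ENNReal.ofReal_mul ha]
    refine mul_le_mul' ?_ le_rfl
    rw [ENNReal.ofReal_tsum_of_nonneg (f := fun t : A => |μ t|) (fun _ => abs_nonneg _) (hsum.subtype A)]
  refine le_trans (ENNReal.tsum_le_tsum hterm) ?_
  rw [ENNReal.tsum_mul_right]
  have hsum1 : (∑' p : S, ∑' t : (p : ℕ × Set T).2, ENNReal.ofReal |μ t|) ≤
      ∑' t : T, ENNReal.ofReal |μ t| := by
    rw [← ENNReal.tsum_sigma' (fun x : Σ p : S, (p : ℕ × Set T).2 =>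
      ENNReal.ofReal |μ (x.2 : T)|)]
    have hinj : Function.Injective
        (fun x : Σ p : S, ((p : ℕ × Set T).2 : Set T) => (x.2 : T)) := by
      rintro ⟨p, t⟩ ⟨p', t'⟩ h
      simp only at h
      have hpp : p = p' := by
        rcases le_total (p : ℕ × Set T).1 (p' : ℕ × Set T).1 with hle | hle
        · exact Subtype.ext (hkey _ p.2 _ p'.2 hle (t : T) t.2 (h ▸ t'.2))
        · exact (Subtype.ext (hkey _ p'.2 _ p.2 hle (t' : T) t'.2 (h ▸ t.2))).symm
      subst hpp
      rw [show t = t' from Subtype.ext h]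
    exact ENNReal.tsum_comp_le_tsum_of_injective hinj _
  have hnorm1 : (∑' t : T, ENNReal.ofReal |μ t|) ≤ 1 := by
    rw [← ENNReal.ofReal_tsum_of_nonneg (fun _ => abs_nonneg _) hsum]
    exact le_trans (ENNReal.ofReal_le_ofReal hnorm) (by simp)
  calc (∑' p : S, ∑' t : (p : ℕ × Set T).2, ENNReal.ofReal |μ t|) * C
      ≤ 1 * C := mul_le_mul' (le_trans hsum1 hnorm1) le_rfl
    _ = C := one_mul C
    _ = ENNReal.ofReal ((Real.log 2) ^ (-(q - 1)) * (n : ℝ) ^ (-(q - 1))) := rfl
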